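/- Fix τ ∈ ℝ and k ∈ ℝ with k ≠ 0. Let ξ₊ᵏ, ξ₋ᵏ be the right and left Jost solutions at k, and ξ₊⁻ᵏ, ξ₋⁻ᵏ the right and left Jost solutions at -k (as in the context), and set φ(k,τ) = k(e^(-iτ)+1) - √(1+k²)(e^(-iτ)-1), which is nonzero. Then: (i) there exists a unique pair (T₁, R₁) ∈ ℂ × ℂ such that ξ₊⁻ᵏ(x) = T₁·ξ₋ᵏ(x) - R₁·ξ₊ᵏ(x) for all x ∈ ℝ, and T₁ = 2·e^(-iτ)·k/φ(k,τ); (ii) there exists a unique pair (T₂, R₂) ∈ ℂ × ℂ such that ξ₋⁻ᵏ(x) = T₂·ξ₊ᵏ(x) - R₂·ξ₋ᵏ(x) for all x ∈ ℝ, and T₂ = 2k/φ(k,τ); in particular T₁ = e^(-iτ)·T₂. -/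

import Mathlib

open Complex Matrix

/-- Pauli matrix σ₁. -/
def σ1 : Matrix (Fin 2) (Fin 2) ℂ := !![0, 1; 1, 0]

/-- Pauli matrix σ₃. -/
def σ3 : Matrix (Fin 2) (Fin 2) ℂ := !![1, 0; 0, -1]

/-- σ⋆(τ) = [[0, e^(-iτ)],[e^(iτ), 0]]. -/
noncomputable def σstar (τ : ℝ) : Matrix (Fin 2) (Fin 2) ℂ :=
  !![0, Complex.exp (-(Complex.I * τ)); Complex.exp (Complex.I * τ), 0]

/-- `ω_k = √(1+k²)`. -/
noncomputable def ωk (k : ℝ) : ℝ := Real.sqrt (1 + k ^ 2)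

/-- A right Jost solution at `k`: continuous, equal to `e^(ikx)·(e^(-iτ), ω_k+k)` for
`x ≥ 0`, differentiable on `(-∞,0)` and solving `i·σ₃·ξ' + σ₁·ξ = ω_k·ξ` there. -/
def IsRightJost (τ k : ℝ) (ξ : ℝ → Fin 2 → ℂ) : Prop :=
  Continuous ξ ∧
  (∀ x : ℝ, x < 0 → DifferentiableAt ℝ ξ x) ∧
  (∀ x : ℝ, 0 ≤ x →
    ξ x = Complex.exp (Complex.I * k * x) •
      ![Complex.exp (-(Complex.I * τ)), ((ωk k : ℝ) : ℂ) + k]) ∧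
  (∀ x : ℝ, x < 0 →
    Complex.I • σ3.mulVec (deriv ξ x) + σ1.mulVec (ξ x) = (((ωk k : ℝ) : ℂ)) • ξ x)

/-- A left Jost solution at `k`: continuous, equal to `e^(-ikx)·(1, ω_k-k)` for
`x ≤ 0`, differentiable on `(0,∞)` and solving `i·σ₃·ξ' + σ⋆(τ)·ξ = ω_k·ξ` there. -/
def IsLeftJost (τ k : ℝ) (ξ : ℝ → Fin 2 → ℂ) : Prop :=
  Continuous ξ ∧
  (∀ x : ℝ, 0 < x → DifferentiableAt ℝ ξ x) ∧
  (∀ x : ℝ, x ≤ 0 →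
    ξ x = Complex.exp (-(Complex.I * k * x)) • ![1, ((ωk k : ℝ) : ℂ) - k]) ∧
  (∀ x : ℝ, 0 < x →
    Complex.I • σ3.mulVec (deriv ξ x) + (σstar τ).mulVec (ξ x) = (((ωk k : ℝ) : ℂ)) • ξ x)


open Set


noncomputable def mvL (M : Matrix (Fin 2) (Fin 2) ℂ) : (Fin 2 → ℂ) →L[ℂ] (Fin 2 → ℂ) :=
  LinearMap.toContinuousLinearMap M.mulVecLin

lemma mvL_apply (M : Matrix (Fin 2) (Fin 2) ℂ) (v : Fin 2 → ℂ) : mvL M v = M.mulVec v := rfl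

lemma mvL_lip (M : Matrix (Fin 2) (Fin 2) ℂ) :
    LipschitzWith ‖mvL M‖₊ (fun y : Fin 2 → ℂ => M.mulVec y) := by
  have : (fun y : Fin 2 → ℂ => M.mulVec y) = ⇑(mvL M) := by funext y; rfl
  rw [this]; exact (mvL M).lipschitz

lemma ode_zero_Ici (M : Matrix (Fin 2) (Fin 2) ℂ) (f : ℝ → Fin 2 → ℂ)
    (hc : Continuous f) (h0 : f 0 = 0)
    (hd : ∀ x : ℝ, 0 < x → HasDerivAt f (M.mulVec (f x)) x) :
    ∀ x : ℝ, 0 ≤ x → f x = 0 := by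
  intro b hb
  rcases eq_or_lt_of_le hb with h | h
  · rw [← h]; exact h0
  have hM0 : M.mulVec (0 : Fin 2 → ℂ) = 0 := Matrix.mulVec_zero M
  have hder0 : HasDerivWithinAt f (M.mulVec (f 0)) (Ici 0) 0 := by
    rw [h0, hM0]
    apply hasDerivWithinAt_Ici_of_tendsto_deriv (s := Ioi (0:ℝ))
      (fun t ht => ((hd t ht).differentiableAt).differentiableWithinAt)
      hc.continuousWithinAt self_mem_nhdsWithin
    have h1 : Filter.Tendsto (fun x => M.mulVec (f x)) (nhdsWithin 0 (Ioi 0)) (nhds 0) := by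
      have := ((mvL M).continuous.comp hc).tendsto 0
      rw [Function.comp] at this
      simp only [mvL_apply, h0, hM0] at this
      exact this.mono_left nhdsWithin_le_nhds
    apply h1.congr'
    filter_upwards [self_mem_nhdsWithin] with x hx
    exact ((hd x hx).deriv).symm
  have key := ODE_solution_unique_of_mem_Icc_right
    (v := fun _ y => M.mulVec y) (s := fun _ => (univ : Set (Fin 2 → ℂ)))
    (fun t _ => (mvL_lip M).lipschitzOnWith)
    (f := f) (g := fun _ => 0) (a := 0) (b := b)
    hc.continuousOn
    (fun t ht => by
      rcases eq_or_lt_of_le ht.1 with h' | h'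
      · rw [← h']; exact hder0
      · exact (hd t h').hasDerivWithinAt)
    (fun _ _ => trivial)
    continuousOn_const
    (fun t ht => by simpa [hM0] using hasDerivWithinAt_const t (Ici t) (0 : Fin 2 → ℂ))
    (fun _ _ => trivial)
    (by simpa using h0)
  exact key ⟨hb, le_rfl⟩

lemma ode_zero_Iic (M : Matrix (Fin 2) (Fin 2) ℂ) (f : ℝ → Fin 2 → ℂ)
    (hc : Continuous f) (h0 : f 0 = 0)
    (hd : ∀ x : ℝ, x < 0 → HasDerivAt f (M.mulVec (f x)) x) :
    ∀ x : ℝ, x ≤ 0 → f x = 0 := by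
  intro b hb
  have := ode_zero_Ici (-M) (fun x => f (-x)) (hc.comp continuous_neg) (by simpa using h0)
    (fun x hx => by
      have h1 := hd (-x) (by linarith)
      have h2 := h1.scomp x (hasDerivAt_neg x)
      simp only [neg_smul, one_smul, Matrix.neg_mulVec] at h2 ⊢
      exact h2)
    (-b) (by linarith)
  simpa using this

lemma ode_zero (Ml Mr : Matrix (Fin 2) (Fin 2) ℂ) (f : ℝ → Fin 2 → ℂ)
    (hc : Continuous f) (h0 : f 0 = 0)
    (hneg : ∀ x : ℝ, x < 0 → HasDerivAt f (Ml.mulVec (f x)) x)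
    (hpos : ∀ x : ℝ, 0 < x → HasDerivAt f (Mr.mulVec (f x)) x) :
    ∀ x : ℝ, f x = 0 := by
  intro x
  rcases le_or_gt x 0 with h | h
  · exact ode_zero_Iic Ml f hc h0 hneg x h
  · exact ode_zero_Ici Mr f hc h0 hpos x h.le

lemma ωk_neg (k : ℝ) : ωk (-k) = ωk k := by simp [ωk]

lemma ωk_sq (k : ℝ) : ((ωk k : ℝ) : ℂ) ^ 2 = 1 + (k : ℂ) ^ 2 := by
  have h : (ωk k) ^ 2 = 1 + k ^ 2 := Real.sq_sqrt (by positivity)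
  rw [← Complex.ofReal_pow, h]; push_cast; ring

/-- Coefficient matrix on the left half-line. -/
noncomputable def Ml (k : ℝ) : Matrix (Fin 2) (Fin 2) ℂ :=
  !![-(Complex.I * ((ωk k : ℝ) : ℂ)), Complex.I;
     -Complex.I, Complex.I * ((ωk k : ℝ) : ℂ)]

/-- Coefficient matrix on the right half-line. -/
noncomputable def Mr (τ k : ℝ) : Matrix (Fin 2) (Fin 2) ℂ :=
  !![-(Complex.I * ((ωk k : ℝ) : ℂ)), Complex.I * Complex.exp (-(Complex.I * τ));
     -(Complex.I * Complex.exp (Complex.I * τ)), Complex.I * ((ωk k : ℝ) : ℂ)]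

lemma left_ode_deriv (k : ℝ) (ξ : ℝ → Fin 2 → ℂ) (x : ℝ)
    (hdiff : DifferentiableAt ℝ ξ x)
    (heq : Complex.I • σ3.mulVec (deriv ξ x) + σ1.mulVec (ξ x) = (((ωk k : ℝ) : ℂ)) • ξ x) :
    HasDerivAt ξ ((Ml k).mulVec (ξ x)) x := by
  have h := hdiff.hasDerivAt
  refine h.congr_deriv (Eq.symm ?_)
  have h0 := congrFun heq 0
  have h1 := congrFun heq 1
  simp [σ3, σ1, Matrix.mulVec, dotProduct, Fin.sum_univ_two] at h0 h1
  have hI : Complex.I * Complex.I = -1 := Complex.I_mul_I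
  funext i
  fin_cases i <;>
    simp [Ml, Matrix.mulVec, dotProduct, Fin.sum_univ_two]
  · linear_combination Complex.I * h0 - (deriv ξ x 0) * hI
  · linear_combination (-Complex.I) * h1 - (deriv ξ x 1) * hI

lemma right_ode_deriv (τ k : ℝ) (ξ : ℝ → Fin 2 → ℂ) (x : ℝ)
    (hdiff : DifferentiableAt ℝ ξ x)
    (heq : Complex.I • σ3.mulVec (deriv ξ x) + (σstar τ).mulVec (ξ x) = (((ωk k : ℝ) : ℂ)) • ξ x) :
    HasDerivAt ξ ((Mr τ k).mulVec (ξ x)) x := by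
  have h := hdiff.hasDerivAt
  refine h.congr_deriv (Eq.symm ?_)
  have h0 := congrFun heq 0
  have h1 := congrFun heq 1
  simp [σ3, σstar, Matrix.mulVec, dotProduct, Fin.sum_univ_two] at h0 h1
  have hI : Complex.I * Complex.I = -1 := Complex.I_mul_I
  funext i
  fin_cases i <;>
    simp [Mr, Matrix.mulVec, dotProduct, Fin.sum_univ_two]
  · linear_combination Complex.I * h0 - (deriv ξ x 0) * hI
  · linear_combination (-Complex.I) * h1 - (deriv ξ x 1) * hI

/-- derivative of `x ↦ exp (c x) • v`. -/
lemma exp_smul_hasDerivAt (c : ℂ) (v : Fin 2 → ℂ) (x : ℝ) :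
    HasDerivAt (fun y : ℝ => Complex.exp (c * y) • v) ((c * Complex.exp (c * x)) • v) x := by
  have h1 : HasDerivAt (fun y : ℝ => c * (y : ℂ)) c x := by
    simpa using (Complex.ofRealCLM.hasDerivAt (x := x)).const_mul c
  have h2 := h1.cexp
  have h3 := h2.smul_const v
  refine h3.congr_deriv (Eq.symm ?_)
  rw [mul_comm]

-- eigenvector lemmas
lemma Ml_eig_p (k : ℝ) :
    (Ml k).mulVec ![1, ((ωk k : ℝ) : ℂ) + k] = (Complex.I * k) • ![1, ((ωk k : ℝ) : ℂ) + k] := by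
  have hω := ωk_sq k
  funext i
  fin_cases i <;>
    simp [Ml, Matrix.mulVec, dotProduct, Fin.sum_univ_two]
  · ring
  · linear_combination Complex.I * hω

lemma Ml_eig_m (k : ℝ) :
    (Ml k).mulVec ![1, ((ωk k : ℝ) : ℂ) - k] = (-(Complex.I * k)) • ![1, ((ωk k : ℝ) : ℂ) - k] := by
  have hω := ωk_sq k
  funext i
  fin_cases i <;>
    simp [Ml, Matrix.mulVec, dotProduct, Fin.sum_univ_two]
  · ring
  · linear_combination Complex.I * hω

lemma Mr_eig_p (τ k : ℝ) :
    (Mr τ k).mulVec ![Complex.exp (-(Complex.I * τ)), ((ωk k : ℝ) : ℂ) + k]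
      = (Complex.I * k) • ![Complex.exp (-(Complex.I * τ)), ((ωk k : ℝ) : ℂ) + k] := by
  have hω := ωk_sq k
  have hE : Complex.exp (Complex.I * τ) * Complex.exp (-(Complex.I * τ)) = 1 := by
    rw [← Complex.exp_add]; simp
  funext i
  fin_cases i <;>
    simp [Mr, Matrix.mulVec, dotProduct, Fin.sum_univ_two]
  · ring
  · linear_combination Complex.I * hω - Complex.I * hE

lemma Mr_eig_m (τ k : ℝ) :
    (Mr τ k).mulVec ![Complex.exp (-(Complex.I * τ)), ((ωk k : ℝ) : ℂ) - k]
      = (-(Complex.I * k)) • ![Complex.exp (-(Complex.I * τ)), ((ωk k : ℝ) : ℂ) - k] := by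
  have hω := ωk_sq k
  have hE : Complex.exp (Complex.I * τ) * Complex.exp (-(Complex.I * τ)) = 1 := by
    rw [← Complex.exp_add]; simp
  funext i
  fin_cases i <;>
    simp [Mr, Matrix.mulVec, dotProduct, Fin.sum_univ_two]
  · ring
  · linear_combination Complex.I * hω - Complex.I * hE

lemma Ml_neg (k : ℝ) : Ml (-k) = Ml k := by simp [Ml, ωk_neg]

lemma Mr_neg (τ k : ℝ) : Mr τ (-k) = Mr τ k := by simp [Mr, ωk_neg]

lemma rightJost_deriv_neg (τ k : ℝ) (ξ : ℝ → Fin 2 → ℂ) (h : IsRightJost τ k ξ) :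
    ∀ x : ℝ, x < 0 → HasDerivAt ξ ((Ml k).mulVec (ξ x)) x :=
  fun x hx => left_ode_deriv k ξ x (h.2.1 x hx) (h.2.2.2 x hx)

lemma leftJost_deriv_pos (τ k : ℝ) (ξ : ℝ → Fin 2 → ℂ) (h : IsLeftJost τ k ξ) :
    ∀ x : ℝ, 0 < x → HasDerivAt ξ ((Mr τ k).mulVec (ξ x)) x :=
  fun x hx => right_ode_deriv τ k ξ x (h.2.1 x hx) (h.2.2.2 x hx)

lemma rightJost_deriv_pos (τ k : ℝ) (ξ : ℝ → Fin 2 → ℂ) (h : IsRightJost τ k ξ) :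
    ∀ x : ℝ, 0 < x → HasDerivAt ξ ((Mr τ k).mulVec (ξ x)) x := by
  intro x hx
  have hEq : ∀ y : ℝ, 0 ≤ y → ξ y = Complex.exp ((Complex.I * k) * y) •
      ![Complex.exp (-(Complex.I * τ)), ((ωk k : ℝ) : ℂ) + k] := h.2.2.1
  have hg := exp_smul_hasDerivAt (Complex.I * k)
      ![Complex.exp (-(Complex.I * τ)), ((ωk k : ℝ) : ℂ) + k] x
  have hev : ξ =ᶠ[nhds x] fun y : ℝ => Complex.exp ((Complex.I * k) * y) •
      ![Complex.exp (-(Complex.I * τ)), ((ωk k : ℝ) : ℂ) + k] := by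
    filter_upwards [isOpen_Ioi.mem_nhds hx] with y hy
    exact hEq y (le_of_lt hy)
  have hd := hg.congr_of_eventuallyEq hev
  refine hd.congr_deriv (Eq.symm ?_)
  rw [hEq x hx.le, Matrix.mulVec_smul, Mr_eig_p, smul_smul]
  congr 1
  ring

lemma leftJost_deriv_neg (τ k : ℝ) (ξ : ℝ → Fin 2 → ℂ) (h : IsLeftJost τ k ξ) :
    ∀ x : ℝ, x < 0 → HasDerivAt ξ ((Ml k).mulVec (ξ x)) x := by
  intro x hx
  have hEq : ∀ y : ℝ, y ≤ 0 → ξ y = Complex.exp (-(Complex.I * k * y)) •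
      ![1, ((ωk k : ℝ) : ℂ) - k] := h.2.2.1
  have hg := exp_smul_hasDerivAt (-(Complex.I * k))
      ![1, ((ωk k : ℝ) : ℂ) - k] x
  simp only [neg_mul] at hg
  have hev : ξ =ᶠ[nhds x] fun y : ℝ => Complex.exp (-(Complex.I * k * y)) •
      ![1, ((ωk k : ℝ) : ℂ) - k] := by
    filter_upwards [isOpen_Iio.mem_nhds hx] with y hy
    exact hEq y (le_of_lt hy)
  have hd := hg.congr_of_eventuallyEq hev
  refine hd.congr_deriv (Eq.symm ?_)
  rw [hEq x hx.le, Matrix.mulVec_smul, Ml_eig_m, smul_smul]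
  congr 1
  ring

lemma key_combo (τ k : ℝ) (ξA ξB ξC : ℝ → Fin 2 → ℂ) (T R : ℂ)
    (hcA : Continuous ξA) (hcB : Continuous ξB) (hcC : Continuous ξC)
    (h0 : ξA 0 = T • ξB 0 - R • ξC 0)
    (hAneg : ∀ x : ℝ, x < 0 → HasDerivAt ξA ((Ml k).mulVec (ξA x)) x)
    (hBneg : ∀ x : ℝ, x < 0 → HasDerivAt ξB ((Ml k).mulVec (ξB x)) x)
    (hCneg : ∀ x : ℝ, x < 0 → HasDerivAt ξC ((Ml k).mulVec (ξC x)) x)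
    (hApos : ∀ x : ℝ, 0 < x → HasDerivAt ξA ((Mr τ k).mulVec (ξA x)) x)
    (hBpos : ∀ x : ℝ, 0 < x → HasDerivAt ξB ((Mr τ k).mulVec (ξB x)) x)
    (hCpos : ∀ x : ℝ, 0 < x → HasDerivAt ξC ((Mr τ k).mulVec (ξC x)) x) :
    ∀ x : ℝ, ξA x = T • ξB x - R • ξC x := by
  have hz := ode_zero (Ml k) (Mr τ k) (fun x => ξA x - (T • ξB x - R • ξC x))
    (hcA.sub ((hcB.const_smul T).sub (hcC.const_smul R)))
    (by simp [h0])
    (fun x hx => by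
      have hd := (hAneg x hx).sub (((hBneg x hx).const_smul T).sub ((hCneg x hx).const_smul R))
      refine hd.congr_deriv (Eq.symm ?_)
      simp [Matrix.mulVec_sub, Matrix.mulVec_smul])
    (fun x hx => by
      have hd := (hApos x hx).sub (((hBpos x hx).const_smul T).sub ((hCpos x hx).const_smul R))
      refine hd.congr_deriv (Eq.symm ?_)
      simp [Matrix.mulVec_sub, Matrix.mulVec_smul])
  intro x
  have := hz x
  rw [sub_eq_zero] at this
  exact this

theorem stmt11 (τ k : ℝ) (hk : k ≠ 0)
    (ξpk ξmk ξpmk ξmmk : ℝ → Fin 2 → ℂ)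
    (h1 : IsRightJost τ k ξpk) (h2 : IsLeftJost τ k ξmk)
    (h3 : IsRightJost τ (-k) ξpmk) (h4 : IsLeftJost τ (-k) ξmmk) :
    let φ : ℂ := (k : ℂ) * (Complex.exp (-(Complex.I * τ)) + 1)
        - ((Real.sqrt (1 + k ^ 2) : ℝ) : ℂ) * (Complex.exp (-(Complex.I * τ)) - 1)
    φ ≠ 0 ∧
    (∃! TR : ℂ × ℂ, ∀ x : ℝ, ξpmk x = TR.1 • ξmk x - TR.2 • ξpk x) ∧
    (∀ T₁ R₁ : ℂ, (∀ x : ℝ, ξpmk x = T₁ • ξmk x - R₁ • ξpk x) →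
      T₁ = 2 * Complex.exp (-(Complex.I * τ)) * k / φ) ∧
    (∃! TR : ℂ × ℂ, ∀ x : ℝ, ξmmk x = TR.1 • ξpk x - TR.2 • ξmk x) ∧
    (∀ T₂ R₂ : ℂ, (∀ x : ℝ, ξmmk x = T₂ • ξpk x - R₂ • ξmk x) →
      T₂ = 2 * k / φ) ∧
    2 * Complex.exp (-(Complex.I * τ)) * k / φ
      = Complex.exp (-(Complex.I * τ)) * (2 * k / φ) := by
  intro φ
  obtain ⟨E, hE⟩ : ∃ t : ℂ, t = Complex.exp (-(Complex.I * τ)) := ⟨_, rfl⟩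
  obtain ⟨E', hE'⟩ : ∃ t : ℂ, t = Complex.exp (Complex.I * τ) := ⟨_, rfl⟩
  have hφdef : φ = (k : ℂ) * (E + 1) - ((ωk k : ℝ) : ℂ) * (E - 1) := by rw [hE]; rfl
  have hEE : E * E' = 1 := by rw [hE, hE', ← Complex.exp_add]; simp
  have hωk : |k| < ωk k := by
    rw [ωk, ← Real.sqrt_sq_eq_abs]
    exact Real.sqrt_lt_sqrt (by positivity) (by nlinarith [_root_.sq_abs k])
  have habs := abs_lt.mp hωk
  have hφne : φ ≠ 0 := by
    intro h
    rw [hφdef] at h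
    have h2' : E * ((ωk k - k : ℝ) : ℂ) = ((ωk k + k : ℝ) : ℂ) := by
      push_cast
      linear_combination -h
    have habsE : ‖E‖ = 1 := by rw [hE]; simp [Complex.norm_exp]
    have habs2 := congrArg (‖·‖) h2'
    rw [norm_mul, habsE, one_mul, Complex.norm_real, Complex.norm_real, Real.norm_eq_abs,
      Real.norm_eq_abs,
      abs_of_pos (by linarith), abs_of_pos (by linarith)] at habs2
    exact hk (by linarith)
  -- values at 0
  have vpk : ξpk 0 = ![E, ((ωk k : ℝ) : ℂ) + k] := by
    rw [hE]
    simpa using h1.2.2.1 0 le_rfl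
  have vmk : ξmk 0 = ![1, ((ωk k : ℝ) : ℂ) - k] := by
    simpa using h2.2.2.1 0 le_rfl
  have vpmk : ξpmk 0 = ![E, ((ωk k : ℝ) : ℂ) - k] := by
    rw [hE]
    have := h3.2.2.1 0 le_rfl
    rw [ωk_neg] at this
    simpa [sub_eq_add_neg] using this
  have vmmk : ξmmk 0 = ![1, ((ωk k : ℝ) : ℂ) + k] := by
    have := h4.2.2.1 0 le_rfl
    rw [ωk_neg] at this
    simpa [sub_eq_add_neg] using this
  -- candidates
  obtain ⟨T₁, hT₁⟩ : ∃ t : ℂ, t = 2 * E * k / φ := ⟨_, rfl⟩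
  obtain ⟨R₁, hR₁⟩ : ∃ t : ℂ, t = T₁ * E' - 1 := ⟨_, rfl⟩
  obtain ⟨T₂, hT₂⟩ : ∃ t : ℂ, t = 2 * k / φ := ⟨_, rfl⟩
  obtain ⟨R₂, hR₂⟩ : ∃ t : ℂ, t = T₂ * E - 1 := ⟨_, rfl⟩
  have hT₁φ : T₁ * ((k : ℂ) * (E + 1) - ((ωk k : ℝ) : ℂ) * (E - 1)) = 2 * E * k := by
    rw [hT₁, ← hφdef]
    field_simp
  have hT₂φ : T₂ * ((k : ℂ) * (E + 1) - ((ωk k : ℝ) : ℂ) * (E - 1)) = 2 * k := by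
    rw [hT₂, ← hφdef]
    field_simp
  -- initial conditions
  have h01 : ξpmk 0 = T₁ • ξmk 0 - R₁ • ξpk 0 := by
    rw [vpk, vmk, vpmk, hR₁]
    funext i
    fin_cases i
    · simp only [Fin.zero_eta, Fin.isValue, Matrix.cons_val_zero, Pi.sub_apply, Pi.smul_apply,
        smul_eq_mul]
      linear_combination T₁ * hEE
    · simp only [Fin.mk_one, Fin.isValue, Matrix.cons_val_one, Matrix.head_cons, Pi.sub_apply,
        Pi.smul_apply, smul_eq_mul, Matrix.cons_val_fin_one]
      linear_combination E' * hT₁φ + (2 * (k : ℂ) + T₁ * (((ωk k : ℝ) : ℂ) - k)) * hEE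
  have h02 : ξmmk 0 = T₂ • ξpk 0 - R₂ • ξmk 0 := by
    rw [vpk, vmk, vmmk, hR₂]
    funext i
    fin_cases i
    · simp only [Fin.zero_eta, Fin.isValue, Matrix.cons_val_zero, Pi.sub_apply, Pi.smul_apply,
        smul_eq_mul]
      ring
    · simp only [Fin.mk_one, Fin.isValue, Matrix.cons_val_one, Matrix.head_cons, Pi.sub_apply,
        Pi.smul_apply, smul_eq_mul, Matrix.cons_val_fin_one]
      linear_combination -hT₂φ
  -- ODE facts
  have Aneg := rightJost_deriv_neg τ (-k) ξpmk h3
  rw [Ml_neg] at Aneg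
  have Apos := rightJost_deriv_pos τ (-k) ξpmk h3
  rw [Mr_neg] at Apos
  have A'neg := leftJost_deriv_neg τ (-k) ξmmk h4
  rw [Ml_neg] at A'neg
  have A'pos := leftJost_deriv_pos τ (-k) ξmmk h4
  rw [Mr_neg] at A'pos
  have claim1 : ∀ x : ℝ, ξpmk x = T₁ • ξmk x - R₁ • ξpk x :=
    key_combo τ k ξpmk ξmk ξpk T₁ R₁ h3.1 h2.1 h1.1 h01
      Aneg (leftJost_deriv_neg τ k ξmk h2) (rightJost_deriv_neg τ k ξpk h1)
      Apos (leftJost_deriv_pos τ k ξmk h2) (rightJost_deriv_pos τ k ξpk h1)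
  have claim2 : ∀ x : ℝ, ξmmk x = T₂ • ξpk x - R₂ • ξmk x :=
    key_combo τ k ξmmk ξpk ξmk T₂ R₂ h4.1 h1.1 h2.1 h02
      A'neg (rightJost_deriv_neg τ k ξpk h1) (leftJost_deriv_neg τ k ξmk h2)
      A'pos (rightJost_deriv_pos τ k ξpk h1) (leftJost_deriv_pos τ k ξmk h2)
  have char1 : ∀ T R : ℂ, (∀ x : ℝ, ξpmk x = T • ξmk x - R • ξpk x) →
      T = 2 * E * k / φ := by
    intro T R hTR
    have h := hTR 0
    rw [vpk, vmk, vpmk] at h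
    have e0 := congrFun h 0
    have e1 := congrFun h 1
    simp only [Fin.isValue, Matrix.cons_val_zero, Matrix.cons_val_one, Matrix.head_cons,
      Pi.sub_apply, Pi.smul_apply, smul_eq_mul] at e0 e1
    rw [eq_div_iff hφne, hφdef]
    linear_combination (-(((ωk k : ℝ) : ℂ) + (k : ℂ))) * e0 + E * e1
  have char2 : ∀ T R : ℂ, (∀ x : ℝ, ξmmk x = T • ξpk x - R • ξmk x) →
      T = 2 * k / φ := by
    intro T R hTR
    have h := hTR 0
    rw [vpk, vmk, vmmk] at h
    have e0 := congrFun h 0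
    have e1 := congrFun h 1
    simp only [Fin.isValue, Matrix.cons_val_zero, Matrix.cons_val_one, Matrix.head_cons,
      Pi.sub_apply, Pi.smul_apply, smul_eq_mul] at e0 e1
    rw [eq_div_iff hφne, hφdef]
    linear_combination (((ωk k : ℝ) : ℂ) - (k : ℂ)) * e0 - e1
  refine ⟨hφne, ?_, ?_, ?_, ?_, ?_⟩
  · refine ⟨(T₁, R₁), claim1, ?_⟩
    rintro ⟨T, R⟩ hTR
    have h := (hTR 0).symm.trans (claim1 0)
    rw [vpk, vmk] at h
    have e0 := congrFun h 0
    have e1 := congrFun h 1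
    simp only [Fin.isValue, Matrix.cons_val_zero, Matrix.cons_val_one, Matrix.head_cons,
      Pi.sub_apply, Pi.smul_apply, smul_eq_mul] at e0 e1
    have hRR : (R - R₁) * ((k : ℂ) * (E + 1) - ((ωk k : ℝ) : ℂ) * (E - 1)) = 0 := by
      linear_combination (((ωk k : ℝ) : ℂ) - (k : ℂ)) * e0 - e1
    have hR : R = R₁ := by
      rcases mul_eq_zero.mp hRR with h' | h'
      · exact sub_eq_zero.mp h'
      · exact absurd (hφdef.trans h') hφne
    have hT : T = T₁ := by linear_combination e0 + E * hR
    simp [Prod.ext_iff, hT, hR]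
  · intro T R hTR
    rw [← hE]
    exact char1 T R hTR
  · refine ⟨(T₂, R₂), claim2, ?_⟩
    rintro ⟨T, R⟩ hTR
    have h := (hTR 0).symm.trans (claim2 0)
    rw [vpk, vmk] at h
    have e0 := congrFun h 0
    have e1 := congrFun h 1
    simp only [Fin.isValue, Matrix.cons_val_zero, Matrix.cons_val_one, Matrix.head_cons,
      Pi.sub_apply, Pi.smul_apply, smul_eq_mul] at e0 e1
    have hTT : (T - T₂) * ((k : ℂ) * (E + 1) - ((ωk k : ℝ) : ℂ) * (E - 1)) = 0 := by
      linear_combination e1 - (((ωk k : ℝ) : ℂ) - (k : ℂ)) * e0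
    have hT : T = T₂ := by
      rcases mul_eq_zero.mp hTT with h' | h'
      · exact sub_eq_zero.mp h'
      · exact absurd (hφdef.trans h') hφne
    have hR : R = R₂ := by linear_combination -e0 + E * hT
    simp [Prod.ext_iff, hT, hR]
  · exact char2
  · rw [← mul_div_assoc]
    ring_nf
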